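/- Assume T(0,y) = 0 for all y ∈ W and the local stability assumption. Suppose there exist ε > 0 with U(ε) ⊆ O, a constant γ ∈ (0,1), and a Lyapunov measure μ̄, i.e., a finite positive Borel measure on X \ U(ε) with [P₁ μ̄](B) ≤ γ μ̄(B) for every Borel B ⊆ X \ U(ε). Then the equilibrium x = 0 is almost everywhere almost surely stable with respect to every finite Borel measure m on X that is absolutely continuous with respect to μ̄ on X \ U(ε) (i.e., m(B) = 0 whenever B ⊆ X \ U(ε) is Borel with μ̄(B) = 0). -/

import Mathlib

open MeasureTheory Filter Metric Set

noncomputable section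

/-- The restriction `P₁` of the Perron–Frobenius operator to a set `S` (= `X \ U(ε)`):
`[P₁ μ](B) = ∫_S ∫_W χ_B(T(x,y)) dv(y) dμ(x)`, with the output measure restricted to `S`. -/
def P1 {α Wsp : Type*} [MeasurableSpace α] [MeasurableSpace Wsp]
    (T : α → Wsp → α) (v : Measure Wsp) (S : Set α) (μ : Measure α) : Measure α :=
  ((μ.restrict S).bind fun x => v.map (T x)).restrict S

/-- The random trajectory `x_{n+1} = T(x_n, y_n)` starting from `x`. -/
def traj {α Wsp : Type*} (T : α → Wsp → α) (x : α) (y : ℕ → Wsp) : ℕ → α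
  | 0 => x
  | n + 1 => T (traj T x y n) (y n)

namespace StabAux

variable {α Wsp : Type*} [MeasurableSpace α] [MeasurableSpace Wsp]

/-- The one-step shift on sequences. -/
def shift (y : ℕ → Wsp) : ℕ → Wsp := fun n => y (n + 1)

lemma measurable_shift : Measurable (shift (Wsp := Wsp)) :=
  measurable_pi_lambda _ fun n => measurable_pi_apply (n + 1)

/-- Splitting a sequence into its head and tail. -/
def split (y : ℕ → Wsp) : Wsp × (ℕ → Wsp) := (y 0, shift y)

lemma measurable_split : Measurable (split (Wsp := Wsp)) :=
  (measurable_pi_apply 0).prodMk measurable_shift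

/-- The collection of prefix cylinders. -/
def cyl (Wsp : Type*) [MeasurableSpace Wsp] : Set (Set (ℕ → Wsp)) :=
  {s | ∃ (n : ℕ) (f : ℕ → Set Wsp), (∀ i, MeasurableSet (f i)) ∧
    s = {y | ∀ i < n, y i ∈ f i}}

lemma univ_mem_cyl : univ ∈ cyl Wsp :=
  ⟨0, fun _ => univ, fun _ => MeasurableSet.univ, by ext y; simp⟩

lemma cyl_measurableSet {s : Set (ℕ → Wsp)} (hs : s ∈ cyl Wsp) : MeasurableSet s := by
  obtain ⟨n, f, hf, rfl⟩ := hs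
  have h : {y : ℕ → Wsp | ∀ i < n, y i ∈ f i} =
      ⋂ i, ⋂ (_ : i < n), (fun y : ℕ → Wsp => y i) ⁻¹' f i := by
    ext y; simp
  rw [h]
  exact MeasurableSet.iInter fun i => MeasurableSet.iInter fun _ =>
    (measurable_pi_apply i) (hf i)

lemma isPiSystem_cyl : IsPiSystem (cyl Wsp) := by
  rintro s ⟨n, f, hf, rfl⟩ t ⟨m, g, hg, rfl⟩ -
  refine ⟨max n m, fun i => (if i < n then f i else univ) ∩ (if i < m then g i else univ),
    fun i => MeasurableSet.inter (by split_ifs; exacts [hf i, MeasurableSet.univ])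
      (by split_ifs; exacts [hg i, MeasurableSet.univ]), ?_⟩
  ext y
  simp only [mem_inter_iff, mem_setOf_eq]
  constructor
  · rintro ⟨h1, h2⟩ i hi
    constructor
    · split_ifs with h; exacts [h1 i h, mem_univ _]
    · split_ifs with h; exacts [h2 i h, mem_univ _]
  · intro h
    constructor
    · intro i hi
      have := (h i (lt_of_lt_of_le hi (le_max_left n m))).1
      rwa [if_pos hi] at this
    · intro i hi
      have := (h i (lt_of_lt_of_le hi (le_max_right n m))).2
      rwa [if_pos hi] at this

lemma generateFrom_cyl :
    MeasurableSpace.generateFrom (cyl Wsp) = (MeasurableSpace.pi : MeasurableSpace (ℕ → Wsp)) := by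
  apply le_antisymm
  · exact MeasurableSpace.generateFrom_le fun s hs => cyl_measurableSet hs
  · refine iSup_le fun i => ?_
    intro s hs
    obtain ⟨s', hs', rfl⟩ := MeasurableSpace.measurableSet_comap.mp hs
    refine MeasurableSpace.measurableSet_generateFrom
      ⟨i + 1, fun j => if j = i then s' else univ, ?_, ?_⟩
    · intro j
      show MeasurableSet (if j = i then s' else univ)
      split_ifs; exacts [hs', MeasurableSet.univ]
    · ext y
      simp only [mem_preimage, mem_setOf_eq]
      constructor
      · intro h j hj
        show y j ∈ (if j = i then s' else univ)
        split_ifs with hji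
        · subst hji; exact h
        · exact mem_univ _
      · intro h
        have h2 := h i (Nat.lt_succ_self i)
        simpa using h2

variable (v : Measure Wsp) (vInf : Measure (ℕ → Wsp))

lemma vInf_cyl
    (hvInf : ∀ (n : ℕ) (f : Fin n → Set Wsp), (∀ i, MeasurableSet (f i)) →
      vInf {y : ℕ → Wsp | ∀ i : Fin n, y (i : ℕ) ∈ f i} = ∏ i, v (f i))
    (n : ℕ) (f : ℕ → Set Wsp) (hf : ∀ i, MeasurableSet (f i)) :
    vInf {y | ∀ i < n, y i ∈ f i} = ∏ i ∈ Finset.range n, v (f i) := by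
  have h := hvInf n (fun i => f i) (fun i => hf i)
  have hs : {y : ℕ → Wsp | ∀ i : Fin n, y (i : ℕ) ∈ f i} = {y | ∀ i < n, y i ∈ f i} := by
    ext y
    constructor
    · intro h i hi; exact h ⟨i, hi⟩
    · intro h i; exact h i i.isLt
  rw [hs] at h
  rw [h, ← Fin.prod_univ_eq_prod_range]

/-- The key independence property: splitting off the first coordinate turns `v^∞` into
the product `v ⊗ v^∞`. -/
lemma map_split_eq [IsProbabilityMeasure v] [IsProbabilityMeasure vInf]
    (hvInf : ∀ (n : ℕ) (f : Fin n → Set Wsp), (∀ i, MeasurableSet (f i)) →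
      vInf {y : ℕ → Wsp | ∀ i : Fin n, y (i : ℕ) ∈ f i} = ∏ i, v (f i)) :
    vInf.map split = v.prod vInf := by
  have hgen : (Prod.instMeasurableSpace : MeasurableSpace (Wsp × (ℕ → Wsp))) =
      MeasurableSpace.generateFrom
        (image2 (· ×ˢ ·) {s : Set Wsp | MeasurableSet s} (cyl Wsp)) := by
    refine (generateFrom_eq_prod MeasurableSpace.generateFrom_measurableSet
      generateFrom_cyl ?_ ?_).symm
    · exact ⟨fun _ => univ, fun _ => MeasurableSet.univ, iUnion_const univ⟩
    · exact ⟨fun _ => univ, fun _ => univ_mem_cyl, iUnion_const univ⟩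
  haveI : IsProbabilityMeasure (vInf.map split) :=
    Measure.isProbabilityMeasure_map measurable_split.aemeasurable
  refine ext_of_generate_finite _ hgen
    (IsPiSystem.prod MeasurableSpace.isPiSystem_measurableSet isPiSystem_cyl) ?_ ?_
  · rintro _ ⟨A, hA, t, ⟨n, f, hf, rfl⟩, rfl⟩
    have ht : MeasurableSet {y : ℕ → Wsp | ∀ i < n, y i ∈ f i} :=
      cyl_measurableSet ⟨n, f, hf, rfl⟩
    rw [Measure.map_apply measurable_split (hA.prod ht), Measure.prod_prod]
    have hpre : split ⁻¹' (A ×ˢ {y : ℕ → Wsp | ∀ i < n, y i ∈ f i}) =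
        {y : ℕ → Wsp | ∀ i < n + 1, y i ∈ (fun j => Nat.casesOn j A f : ℕ → Set Wsp) i} := by
      ext y
      simp only [mem_preimage, split, shift, mem_prod, mem_setOf_eq]
      constructor
      · rintro ⟨h0, h1⟩ i hi
        cases i with
        | zero => exact h0
        | succ k => exact h1 k (by omega)
      · intro h
        exact ⟨h 0 (by omega), fun i hi => h (i + 1) (by omega)⟩
    rw [hpre, vInf_cyl v vInf hvInf (n + 1) _
        (fun i => by cases i with | zero => exact hA | succ k => exact hf k),
      vInf_cyl v vInf hvInf n f hf, Finset.prod_range_succ']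
    exact mul_comm _ _
  · simp [measure_univ]

lemma split_fubini [IsProbabilityMeasure v] [IsProbabilityMeasure vInf]
    (hvInf : ∀ (n : ℕ) (f : Fin n → Set Wsp), (∀ i, MeasurableSet (f i)) →
      vInf {y : ℕ → Wsp | ∀ i : Fin n, y (i : ℕ) ∈ f i} = ∏ i, v (f i))
    {E : Set (Wsp × (ℕ → Wsp))} (hE : MeasurableSet E) :
    vInf (split ⁻¹' E) = ∫⁻ w, vInf {t | (w, t) ∈ E} ∂v := by
  rw [← Measure.map_apply measurable_split hE, map_split_eq v vInf hvInf,
    Measure.prod_apply hE]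
  rfl

lemma traj_succ_shift (T : α → Wsp → α) (x : α) (y : ℕ → Wsp) :
    ∀ n, traj T x y (n + 1) = traj T (T x (y 0)) (shift y) n
  | 0 => rfl
  | n + 1 => by
    show T (traj T x y (n + 1)) (y (n + 1)) = T (traj T (T x (y 0)) (shift y) n) (shift y n)
    rw [traj_succ_shift T x y n]; rfl

lemma measurable_traj {T : α → Wsp → α} (hT : Measurable (Function.uncurry T)) :
    ∀ n, Measurable (fun p : α × (ℕ → Wsp) => traj T p.1 p.2 n)
  | 0 => measurable_fst
  | n + 1 => by
    have h : (fun p : α × (ℕ → Wsp) => traj T p.1 p.2 (n + 1)) =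
        fun p => Function.uncurry T (traj T p.1 p.2 n, p.2 n) := rfl
    rw [h]
    exact hT.comp ((measurable_traj hT n).prodMk ((measurable_pi_apply n).comp measurable_snd))

end StabAux

/-- under the equilibrium and local stability assumption, if there are
`ε > 0` with `U(ε) ⊆ O`, `γ ∈ (0,1)` and a Lyapunov measure `μ̄` on `X \ U(ε)` (a finite
positive measure with `[P₁ μ̄](B) ≤ γ μ̄(B)` for all Borel `B ⊆ X \ U(ε)`), then `x = 0`
is a.e. almost surely stable with respect to every finite measure `m` absolutely continuous
with respect to `μ̄` on `X \ U(ε)`. -/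
theorem ae_almost_sure_stable_of_lyapunov_measure
    {d : ℕ} {Wsp : Type*} [MeasurableSpace Wsp]
    (X : Set (EuclideanSpace ℝ (Fin d))) (hX : IsCompact X)
    (v : Measure Wsp) [IsProbabilityMeasure v]
    (T : EuclideanSpace ℝ (Fin d) → Wsp → EuclideanSpace ℝ (Fin d))
    (hT : Measurable (Function.uncurry T))
    (hTcont : ∀ y : Wsp, Continuous fun x => T x y)
    (hTX : ∀ x ∈ X, ∀ y, T x y ∈ X)
    (heq : ∀ y : Wsp, T 0 y = 0)
    -- the infinite product measure `v^∞` on `W^ℕ`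
    (vInf : Measure (ℕ → Wsp)) [IsProbabilityMeasure vInf]
    (hvInf : ∀ (n : ℕ) (f : Fin n → Set Wsp), (∀ i, MeasurableSet (f i)) →
      vInf {y : ℕ → Wsp | ∀ i : Fin n, y (i : ℕ) ∈ f i} = ∏ i, v (f i))
    -- local stability assumption
    (O : Set (EuclideanSpace ℝ (Fin d))) (hO : O ∈ nhdsWithin 0 X) (hOX : O ⊆ X)
    (hstab : ∀ x₀ ∈ O, ∀ᵐ y ∂vInf,
      (∀ n : ℕ, traj T x₀ y n ∈ O) ∧ Tendsto (traj T x₀ y) atTop (nhds 0))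
    -- a Lyapunov measure `μ̄` with rate `γ < 1` on `X \ U(ε)`, `U(ε) ⊆ O`
    (ε : ℝ) (hε : 0 < ε) (hUO : X ∩ ball 0 ε ⊆ O)
    (γ : ENNReal) (hγ0 : 0 < γ) (hγ1 : γ < 1)
    (μbar : Measure (EuclideanSpace ℝ (Fin d))) [IsFiniteMeasure μbar]
    (hsupp : μbar (X \ ball 0 ε)ᶜ = 0)
    (hlyap : ∀ B : Set (EuclideanSpace ℝ (Fin d)), MeasurableSet B → B ⊆ X \ ball 0 ε →
      P1 T v (X \ ball 0 ε) μbar B ≤ γ * μbar B)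
    -- a finite measure `m` absolutely continuous w.r.t. `μ̄` on `X \ U(ε)`
    (m : Measure (EuclideanSpace ℝ (Fin d))) [IsFiniteMeasure m] (hmX : m Xᶜ = 0)
    (hac : ∀ B : Set (EuclideanSpace ℝ (Fin d)), MeasurableSet B → B ⊆ X \ ball 0 ε →
      μbar B = 0 → m B = 0) :
    -- conclusion: `x = 0` is a.e. almost surely stable w.r.t. `m`
    ∀ δ : ENNReal, 0 < δ →
      m {x : EuclideanSpace ℝ (Fin d) |
          δ ≤ vInf {y : ℕ → Wsp | ¬ Tendsto (traj T x y) atTop (nhds 0)}} = 0 := by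
  classical
  intro δ hδ
  -- basic sets
  have hXclosed : IsClosed X := hX.isClosed
  set S : Set (EuclideanSpace ℝ (Fin d)) := X \ ball 0 ε with hS_def

  have hSmeas : MeasurableSet S := by
    rw [hS_def]; exact hXclosed.measurableSet.diff measurableSet_ball
  have hSX : S ⊆ X := by rw [hS_def]; exact diff_subset
  have hS_mem : ∀ z : EuclideanSpace ℝ (Fin d), z ∈ X → z ∉ ball 0 ε → z ∈ S := by
    intro z h1 h2; rw [hS_def]; exact ⟨h1, h2⟩
  have hS_not : ∀ z : EuclideanSpace ℝ (Fin d), z ∈ X → z ∉ S → z ∈ ball 0 ε := by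
    intro z h1 h2
    by_contra hb
    exact h2 (hS_mem z h1 hb)
  set O' : Set (EuclideanSpace ℝ (Fin d)) := X ∩ ball 0 ε with hO'_def
  have hO'O : O' ⊆ O := by rw [hO'_def]; exact hUO
  have hO'_mem : ∀ z : EuclideanSpace ℝ (Fin d), z ∈ X → z ∈ ball 0 ε → z ∈ O' := by
    intro z h1 h2; rw [hO'_def]; exact ⟨h1, h2⟩
  have hO'meas : MeasurableSet O' := by
    rw [hO'_def]; exact hXclosed.measurableSet.inter measurableSet_ball
  -- the failure probability
  set F : EuclideanSpace ℝ (Fin d) → ENNReal := fun x => vInf {y | ¬ Tendsto (traj T x y) atTop (nhds 0)} with hF_def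
  have hFO' : ∀ x ∈ O', F x = 0 := by
    intro x hx
    have h0 : vInf {y | ¬ ((∀ n : ℕ, traj T x y n ∈ O) ∧
        Tendsto (traj T x y) atTop (nhds 0))} = 0 := ae_iff.mp (hstab x (hO'O hx))
    refine measure_mono_null ?_ h0
    intro y hy hP
    exact hy hP.2
  -- measurability facts
  have hmtraj : ∀ n, Measurable (fun p : EuclideanSpace ℝ (Fin d) × (ℕ → Wsp) => traj T p.1 p.2 n) :=
    StabAux.measurable_traj hT
  have hTendSet : MeasurableSet {p : EuclideanSpace ℝ (Fin d) × (ℕ → Wsp) | Tendsto (traj T p.1 p.2) atTop (nhds 0)} :=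
    measurableSet_tendsto_fun hmtraj measurable_const
  have hFmeas : Measurable F :=
    measurable_measure_prodMk_left (ν := vInf) hTendSet.compl
  have hTx : ∀ x, Measurable (T x) := fun x => hT.comp measurable_prodMk_left
  have hκ : Measurable (fun x : EuclideanSpace ℝ (Fin d) => v.map (T x)) := by
    apply Measure.measurable_of_measurable_coe
    intro s hs
    have h : (fun x : EuclideanSpace ℝ (Fin d) => (v.map (T x)) s) =
        fun x => v (Prod.mk x ⁻¹' (Function.uncurry T ⁻¹' s)) := by
      funext x
      rw [Measure.map_apply (hTx x) hs]
      rfl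
    rw [h]
    exact measurable_measure_prodMk_left (hT hs)
  -- P1 facts
  have hP1_apply : ∀ (μ : Measure (EuclideanSpace ℝ (Fin d))) (B : Set (EuclideanSpace ℝ (Fin d))), MeasurableSet B →
      P1 T v S μ B = ∫⁻ x in S, (v.map (T x)) (B ∩ S) ∂μ := by
    intro μ B hB
    rw [P1, Measure.restrict_apply hB, Measure.bind_apply (hB.inter hSmeas) hκ.aemeasurable]
  have hP1_mono : ∀ (μ₁ μ₂ : Measure (EuclideanSpace ℝ (Fin d))) (c : ENNReal),
      (∀ B : Set (EuclideanSpace ℝ (Fin d)), MeasurableSet B → μ₁ (B ∩ S) ≤ c * μ₂ (B ∩ S)) →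
      ∀ B : Set (EuclideanSpace ℝ (Fin d)), MeasurableSet B → P1 T v S μ₁ B ≤ c * P1 T v S μ₂ B := by
    intro μ₁ μ₂ c h B hB
    rw [hP1_apply μ₁ B hB, hP1_apply μ₂ B hB]
    have hle : μ₁.restrict S ≤ c • μ₂.restrict S := by
      refine Measure.le_iff.mpr fun s hs => ?_
      rw [Measure.restrict_apply hs, Measure.smul_apply, Measure.restrict_apply hs, smul_eq_mul]
      exact h s hs
    calc ∫⁻ x in S, (v.map (T x)) (B ∩ S) ∂μ₁
        ≤ ∫⁻ x, (v.map (T x)) (B ∩ S) ∂(c • μ₂.restrict S) := lintegral_mono' hle le_rfl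
      _ = c * ∫⁻ x in S, (v.map (T x)) (B ∩ S) ∂μ₂ := lintegral_smul_measure c _
  -- the iterates of P1
  set Pf : Measure (EuclideanSpace ℝ (Fin d)) → Measure (EuclideanSpace ℝ (Fin d)) := fun μ => P1 T v S μ with hPf_def
  set μseq : ℕ → Measure (EuclideanSpace ℝ (Fin d)) := fun n => Pf^[n] μbar with hμseq_def
  have hμsucc : ∀ n, μseq (n + 1) = Pf (μseq n) := fun n =>
    Function.iterate_succ_apply' Pf n μbar
  have hμzero : μseq 0 = μbar := rfl
  have hlyap' : ∀ B : Set (EuclideanSpace ℝ (Fin d)), MeasurableSet B → Pf μbar (B ∩ S) ≤ γ * μbar (B ∩ S) := by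
    intro B hB
    exact hlyap (B ∩ S) (hB.inter hSmeas) inter_subset_right
  have hμseq_le : ∀ n, ∀ B : Set (EuclideanSpace ℝ (Fin d)), MeasurableSet B →
      μseq n (B ∩ S) ≤ γ ^ n * μbar (B ∩ S) := by
    intro n
    induction n with
    | zero => intro B hB; simp [hμzero]
    | succ n ih =>
      intro B hB
      rw [hμsucc n]
      calc Pf (μseq n) (B ∩ S) ≤ γ ^ n * Pf μbar (B ∩ S) :=
            hP1_mono (μseq n) μbar (γ ^ n) ih (B ∩ S) (hB.inter hSmeas)
        _ ≤ γ ^ n * (γ * μbar (B ∩ S)) := by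
            refine mul_le_mul_right ?_ _
            have h := hlyap' B hB
            simpa [inter_assoc] using h
        _ = γ ^ (n + 1) * μbar (B ∩ S) := by rw [pow_succ, mul_assoc]
  have hμseqS : ∀ n, μseq n S ≤ γ ^ n * μbar S := by
    intro n
    simpa using hμseq_le n univ MeasurableSet.univ
  -- the staying probabilities H n
  set H : ℕ → EuclideanSpace ℝ (Fin d) → ENNReal := fun n x => vInf {y | ∀ k ≤ n, traj T x y k ∈ S} with hH_def
  have hHmeas : ∀ n, Measurable (H n) := by
    intro n
    have hset : MeasurableSet {p : EuclideanSpace ℝ (Fin d) × (ℕ → Wsp) | ∀ k ≤ n, traj T p.1 p.2 k ∈ S} := by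
      have h : {p : EuclideanSpace ℝ (Fin d) × (ℕ → Wsp) | ∀ k ≤ n, traj T p.1 p.2 k ∈ S} =
          ⋂ k, ⋂ (_ : k ≤ n), (fun p : EuclideanSpace ℝ (Fin d) × (ℕ → Wsp) => traj T p.1 p.2 k) ⁻¹' S := by
        ext p; simp
      rw [h]
      exact MeasurableSet.iInter fun k => MeasurableSet.iInter fun _ => (hmtraj k) hSmeas
    exact measurable_measure_prodMk_left (ν := vInf) hset
  have hHoff : ∀ n, ∀ x, x ∉ S → H n x = 0 := by
    intro n x hx
    have h : {y : ℕ → Wsp | ∀ k ≤ n, traj T x y k ∈ S} = ∅ := by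
      ext y
      simp only [mem_setOf_eq, mem_empty_iff_false, iff_false, not_forall]
      exact ⟨0, Nat.zero_le n, hx⟩
    show vInf _ = 0
    rw [h, measure_empty]
  have hHzero : ∀ x, H 0 x = S.indicator (fun _ => 1) x := by
    intro x
    by_cases hx : x ∈ S
    · rw [indicator_of_mem hx]
      have h : {y : ℕ → Wsp | ∀ k ≤ 0, traj T x y k ∈ S} = univ := by
        ext y
        simp only [mem_setOf_eq, mem_univ, iff_true]
        intro k hk
        cases Nat.le_zero.mp hk
        exact hx
      show vInf _ = 1
      rw [h, measure_univ]
    · rw [indicator_of_notMem hx, hHoff 0 x hx]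
  have hHrec : ∀ n x, H (n + 1) x = S.indicator (fun x => ∫⁻ w, H n (T x w) ∂v) x := by
    intro n x
    by_cases hx : x ∈ S
    · rw [indicator_of_mem hx]
      have hEset : MeasurableSet {q : Wsp × (ℕ → Wsp) | ∀ k ≤ n, traj T (T x q.1) q.2 k ∈ S} := by
        have h : {q : Wsp × (ℕ → Wsp) | ∀ k ≤ n, traj T (T x q.1) q.2 k ∈ S} =
            ⋂ k, ⋂ (_ : k ≤ n), (fun q : Wsp × (ℕ → Wsp) => traj T (T x q.1) q.2 k) ⁻¹' S := by
          ext q; simp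
        rw [h]
        refine MeasurableSet.iInter fun k => MeasurableSet.iInter fun _ => ?_
        have hm : Measurable (fun q : Wsp × (ℕ → Wsp) => traj T (T x q.1) q.2 k) :=
          (hmtraj k).comp ((hT.comp (measurable_const.prodMk measurable_fst)).prodMk
            measurable_snd)
        exact hm hSmeas
      have hpre : {y : ℕ → Wsp | ∀ k ≤ n + 1, traj T x y k ∈ S} =
          StabAux.split ⁻¹' {q : Wsp × (ℕ → Wsp) | ∀ k ≤ n, traj T (T x q.1) q.2 k ∈ S} := by
        ext y
        simp only [mem_setOf_eq, mem_preimage, StabAux.split]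
        constructor
        · intro h k hk
          have h2 := h (k + 1) (by omega)
          rwa [StabAux.traj_succ_shift T x y k] at h2
        · intro h k hk
          cases k with
          | zero => exact hx
          | succ k =>
            rw [StabAux.traj_succ_shift T x y k]
            exact h k (by omega)
      show vInf _ = _
      rw [hpre, StabAux.split_fubini v vInf hvInf hEset]
      rfl
    · rw [indicator_of_notMem hx, hHoff (n + 1) x hx]
  -- exchange lemma
  have hexch : ∀ (n : ℕ) (μ : Measure (EuclideanSpace ℝ (Fin d))), ∫⁻ x, H (n + 1) x ∂μ = ∫⁻ x, H n x ∂(Pf μ) := by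
    intro n μ
    have hind : ∀ z, S.indicator (H n) z = H n z := by
      intro z
      by_cases hz : z ∈ S
      · rw [indicator_of_mem hz]
      · rw [indicator_of_notMem hz, hHoff n z hz]
    calc ∫⁻ x, H (n + 1) x ∂μ
        = ∫⁻ x, S.indicator (fun x => ∫⁻ w, H n (T x w) ∂v) x ∂μ :=
          lintegral_congr fun x => hHrec n x
      _ = ∫⁻ x in S, ∫⁻ w, H n (T x w) ∂v ∂μ := lintegral_indicator hSmeas _
      _ = ∫⁻ x in S, ∫⁻ z, H n z ∂(v.map (T x)) ∂μ := by
          refine lintegral_congr fun x => ?_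
          rw [lintegral_map (hHmeas n) (hTx x)]
      _ = ∫⁻ z, H n z ∂((μ.restrict S).bind fun x => v.map (T x)) :=
          (Measure.lintegral_bind hκ.aemeasurable (hHmeas n).aemeasurable).symm
      _ = ∫⁻ z, H n z ∂(Pf μ) := by
          rw [show Pf μ = ((μ.restrict S).bind fun x => v.map (T x)).restrict S from rfl]
          rw [← lintegral_indicator hSmeas]
          exact lintegral_congr fun z => (hind z).symm
  -- iterating
  have hiter : ∀ n m', ∫⁻ x, H n x ∂(μseq m') = μseq (n + m') S := by
    intro n
    induction n with
    | zero =>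
      intro m'
      rw [lintegral_congr (fun x => hHzero x), lintegral_indicator hSmeas, setLIntegral_one]
      norm_num
    | succ n ih =>
      intro m'
      rw [hexch n (μseq m'), ← hμsucc m', ih (m' + 1)]
      have harith : n + (m' + 1) = n + 1 + m' := by omega
      rw [harith]
  have hHint : ∀ n, ∫⁻ x, H n x ∂μbar ≤ γ ^ n * μbar S := by
    intro n
    have h := hiter n 0
    rw [hμzero] at h
    rw [h]
    simpa using hμseqS n
  -- STEP A: the events "trajectory visits O' at time k but fails to converge" are null
  have htrajX : ∀ x ∈ X, ∀ (y : ℕ → Wsp) (k : ℕ), traj T x y k ∈ X := by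
    intro x hx y k
    induction k with
    | zero => exact hx
    | succ k ih => exact hTX _ ih (y k)
  have hA : ∀ (k : ℕ) (x : EuclideanSpace ℝ (Fin d)), x ∈ X →
      vInf {y | traj T x y k ∈ O' ∧ ¬ Tendsto (traj T x y) atTop (nhds 0)} = 0 := by
    intro k
    induction k with
    | zero =>
      intro x hx
      by_cases hxO : x ∈ O'
      · refine measure_mono_null ?_ (ae_iff.mp (hstab x (hO'O hxO)))
        intro y hy hP
        exact hy.2 hP.2
      · exact measure_mono_null (fun y hy => (hxO hy.1).elim) measure_empty
    | succ k ih =>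
      intro x hx
      have hEkmeas : MeasurableSet {q : Wsp × (ℕ → Wsp) |
          traj T (T x q.1) q.2 k ∈ O' ∧ ¬ Tendsto (traj T (T x q.1) q.2) atTop (nhds 0)} := by
        have h1 : Measurable (fun q : Wsp × (ℕ → Wsp) => (T x q.1, q.2)) :=
          (hT.comp (measurable_const.prodMk measurable_fst)).prodMk measurable_snd
        have h2 : MeasurableSet {q : Wsp × (ℕ → Wsp) | traj T (T x q.1) q.2 k ∈ O'} :=
          ((hmtraj k).comp h1) hO'meas
        have h3 : MeasurableSet {q : Wsp × (ℕ → Wsp) |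
            Tendsto (traj T (T x q.1) q.2) atTop (nhds 0)} := h1 hTendSet
        exact h2.inter h3.compl
      have heqf : ∀ y : ℕ → Wsp,
          (fun n => traj T x y (n + 1)) = traj T (T x (y 0)) (StabAux.shift y) :=
        fun y => funext fun n => StabAux.traj_succ_shift T x y n
      have hpre : {y : ℕ → Wsp | traj T x y (k + 1) ∈ O' ∧
            ¬ Tendsto (traj T x y) atTop (nhds 0)} =
          StabAux.split ⁻¹' {q : Wsp × (ℕ → Wsp) |
            traj T (T x q.1) q.2 k ∈ O' ∧ ¬ Tendsto (traj T (T x q.1) q.2) atTop (nhds 0)} := by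
        ext y
        simp only [mem_setOf_eq, mem_preimage, StabAux.split]
        rw [StabAux.traj_succ_shift T x y k]
        constructor
        · rintro ⟨h1, h2⟩
          refine ⟨h1, fun hc => h2 ?_⟩
          rw [← tendsto_add_atTop_iff_nat 1]
          rw [show (fun n => traj T x y (n + 1)) = traj T (T x (y 0)) (StabAux.shift y) from
            heqf y]
          exact hc
        · rintro ⟨h1, h2⟩
          refine ⟨h1, fun hc => h2 ?_⟩
          rw [← heqf y]
          exact (tendsto_add_atTop_iff_nat 1).mpr hc
      rw [hpre, StabAux.split_fubini v vInf hvInf hEkmeas]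
      have hzero : ∀ w, vInf {t | traj T (T x w) t k ∈ O' ∧
          ¬ Tendsto (traj T (T x w) t) atTop (nhds 0)} = 0 :=
        fun w => ih (T x w) (hTX x hx w)
      calc ∫⁻ w, vInf {t | (w, t) ∈ {q : Wsp × (ℕ → Wsp) |
              traj T (T x q.1) q.2 k ∈ O' ∧
                ¬ Tendsto (traj T (T x q.1) q.2) atTop (nhds 0)}} ∂v
          = ∫⁻ _, 0 ∂v := lintegral_congr fun w => hzero w
        _ = 0 := lintegral_zero
  -- F ≤ H n on X
  have hFH : ∀ n, ∀ x ∈ X, F x ≤ H n x := by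
    intro n x hx
    have hsub : {y : ℕ → Wsp | ¬ Tendsto (traj T x y) atTop (nhds 0)} ⊆
        {y | ∀ k ≤ n, traj T x y k ∈ S} ∪
          ⋃ k, ⋃ (_ : k ≤ n),
            {y | traj T x y k ∈ O' ∧ ¬ Tendsto (traj T x y) atTop (nhds 0)} := by
      intro y hy
      by_cases hall : ∀ k ≤ n, traj T x y k ∈ S
      · exact Or.inl hall
      · push_neg at hall
        obtain ⟨k, hk, hkS⟩ := hall
        refine Or.inr (mem_iUnion.mpr ⟨k, mem_iUnion.mpr ⟨hk, ?_⟩⟩)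
        have hXk := htrajX x hx y k
        have hball : traj T x y k ∈ ball (0 : EuclideanSpace ℝ (Fin d)) ε :=
          hS_not _ hXk hkS
        exact ⟨hO'_mem _ hXk hball, hy⟩
    have hnull : vInf (⋃ k, ⋃ (_ : k ≤ n),
        {y | traj T x y k ∈ O' ∧ ¬ Tendsto (traj T x y) atTop (nhds 0)}) = 0 :=
      measure_iUnion_null fun k => measure_iUnion_null fun _ => hA k x hx
    calc F x ≤ vInf ({y | ∀ k ≤ n, traj T x y k ∈ S} ∪
          ⋃ k, ⋃ (_ : k ≤ n),
            {y | traj T x y k ∈ O' ∧ ¬ Tendsto (traj T x y) atTop (nhds 0)}) :=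
        measure_mono hsub
      _ ≤ H n x + 0 := le_trans (measure_union_le _ _) (by rw [hnull])
      _ = H n x := add_zero _
  -- ∫_S F dμbar = 0
  have hFS : ∫⁻ x in S, F x ∂μbar = 0 := by
    have hle : ∀ n, ∫⁻ x in S, F x ∂μbar ≤ γ ^ n * μbar S := by
      intro n
      calc ∫⁻ x in S, F x ∂μbar ≤ ∫⁻ x in S, H n x ∂μbar :=
            setLIntegral_mono (hHmeas n) (fun x hx => hFH n x (hSX hx))
        _ ≤ ∫⁻ x, H n x ∂μbar := setLIntegral_le_lintegral _ _
        _ ≤ γ ^ n * μbar S := hHint n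
    have htend : Tendsto (fun n => γ ^ n * μbar S) atTop (nhds 0) := by
      have h1 : Tendsto (fun n : ℕ => γ ^ n) atTop (nhds 0) :=
        ENNReal.tendsto_pow_atTop_nhds_zero_of_lt_one hγ1
      have h2 := ENNReal.Tendsto.mul_const h1 (Or.inr (measure_ne_top μbar S))
      simpa using h2
    exact le_antisymm (ge_of_tendsto' htend hle) zero_le
  -- conclusion
  have hBadS_meas : MeasurableSet ({x : EuclideanSpace ℝ (Fin d) | δ ≤ F x} ∩ S) :=
    (measurableSet_le measurable_const hFmeas).inter hSmeas
  have hμbarBad : μbar ({x : EuclideanSpace ℝ (Fin d) | δ ≤ F x} ∩ S) = 0 := by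
    have hle : δ * μbar ({x : EuclideanSpace ℝ (Fin d) | δ ≤ F x} ∩ S) ≤ ∫⁻ x in S, F x ∂μbar := by
      calc δ * μbar ({x : EuclideanSpace ℝ (Fin d) | δ ≤ F x} ∩ S)
          = ∫⁻ _ in {x : EuclideanSpace ℝ (Fin d) | δ ≤ F x} ∩ S, δ ∂μbar := (setLIntegral_const _ _).symm
        _ ≤ ∫⁻ x in {x : EuclideanSpace ℝ (Fin d) | δ ≤ F x} ∩ S, F x ∂μbar :=
            setLIntegral_mono hFmeas (fun x hx => hx.1)
        _ ≤ ∫⁻ x in S, F x ∂μbar := lintegral_mono_set inter_subset_right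
    rw [hFS] at hle
    have heq0 : δ * μbar ({x : EuclideanSpace ℝ (Fin d) | δ ≤ F x} ∩ S) = 0 := le_antisymm hle zero_le
    rcases mul_eq_zero.mp heq0 with h | h
    · exact absurd h hδ.ne'
    · exact h
  have hmBadS : m ({x : EuclideanSpace ℝ (Fin d) | δ ≤ F x} ∩ S) = 0 :=
    hac _ hBadS_meas inter_subset_right hμbarBad
  have hsub : {x : EuclideanSpace ℝ (Fin d) | δ ≤ F x} ⊆ ({x : EuclideanSpace ℝ (Fin d) | δ ≤ F x} ∩ S) ∪ Xᶜ := by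
    intro x hx
    by_cases hxX : x ∈ X
    · by_cases hxS : x ∈ S
      · exact Or.inl ⟨hx, hxS⟩
      · exfalso
        have hball : x ∈ ball (0 : EuclideanSpace ℝ (Fin d)) ε := hS_not _ hxX hxS
        have hzero := hFO' x (hO'_mem _ hxX hball)
        rw [mem_setOf_eq, hzero] at hx
        exact hδ.ne' (le_antisymm hx zero_le)
    · exact Or.inr hxX
  show m {x : EuclideanSpace ℝ (Fin d) | δ ≤ F x} = 0
  refine le_antisymm ?_ zero_le
  calc m {x : EuclideanSpace ℝ (Fin d) | δ ≤ F x} ≤ m (({x : EuclideanSpace ℝ (Fin d) | δ ≤ F x} ∩ S) ∪ Xᶜ) := measure_mono hsub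
    _ ≤ m ({x : EuclideanSpace ℝ (Fin d) | δ ≤ F x} ∩ S) + m Xᶜ := measure_union_le _ _
    _ = 0 := by rw [hmBadS, hmX, add_zero]
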